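/- In the Clifford algebra Cl(ℝ⁴) acting on the 4-dimensional complex spinor space Δ₄, the determinant of the endomorphism given by a + ω + f·e₁₂₃₄, where a, f are scalars and ω is a 2-form with self-dual part ω₊ and anti-self-dual part ω₋, equals [(a+f)² + 4‖ω₊‖²]·[(a−f)² + 4‖ω₋‖²]. -/

import Mathlib

/-- The Levi-Civita symbol `ε_{ijkl}` on `ℝ⁴` (for the chosen orientation). -/
def eps4 (i j k l : Fin 4) : ℝ :=
  if i = j ∨ i = k ∨ i = l ∨ j = k ∨ j = l ∨ k = l then 0
  else -((if i < j then 1 else -1) * (if i < k then 1 else -1)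
    * (if i < l then 1 else -1) * (if j < k then 1 else -1)
    * (if j < l then 1 else -1) * (if k < l then 1 else -1))

/-- The Hodge star of a 2-form on `ℝ⁴`, `(*ω)_{ij} = (1/2) Σ_{kl} ε_{ijkl} ω_{kl}`. -/
noncomputable def hodge (ω : Fin 4 → Fin 4 → ℝ) : Fin 4 → Fin 4 → ℝ :=
  fun i j => (1 / 2 : ℝ) * ∑ k : Fin 4, ∑ l : Fin 4, eps4 i j k l * ω k l

/-- Self-dual part `ω₊ = (ω + *ω)/2` of a 2-form on `ℝ⁴`. -/
noncomputable def sdPart (ω : Fin 4 → Fin 4 → ℝ) : Fin 4 → Fin 4 → ℝ :=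
  fun i j => (ω i j + hodge ω i j) / 2

/-- Anti-self-dual part `ω₋ = (ω − *ω)/2` of a 2-form on `ℝ⁴`. -/
noncomputable def asdPart (ω : Fin 4 → Fin 4 → ℝ) : Fin 4 → Fin 4 → ℝ :=
  fun i j => (ω i j - hodge ω i j) / 2

/-- The squared norm of a 2-form (with the tensorial normalisation
`‖eᵢ ∧ eⱼ‖² = 1/2`). -/
noncomputable def normSq2 (η : Fin 4 → Fin 4 → ℝ) : ℝ :=
  (1 / 4 : ℝ) * ∑ i : Fin 4, ∑ j : Fin 4, (η i j) ^ 2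

open LinearMap Module

-- 2x2 det from traces (matrix level)
lemma det2_mat (A : Matrix (Fin 2) (Fin 2) ℂ) :
    2 * A.det = A.trace ^ 2 - (A * A).trace := by
  simp [Matrix.det_fin_two, Matrix.trace_fin_two, Matrix.mul_apply, Fin.sum_univ_two]
  ring

lemma det_end_two (V : Type*) [AddCommGroup V] [Module ℂ V]
    (h2 : Module.finrank ℂ V = 2) (S : Module.End ℂ V) :
    2 * LinearMap.det S = (trace ℂ V S) ^ 2 - trace ℂ V (S * S) := by
  have : FiniteDimensional ℂ V := Module.finite_of_finrank_pos (by omega)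
  let b : Basis (Fin 2) ℂ V := (Module.finBasis ℂ V).reindex (finCongr h2)
  rw [← LinearMap.det_toMatrix b, trace_eq_matrix_trace ℂ b, trace_eq_matrix_trace ℂ b,
    LinearMap.toMatrix_mul]
  exact det2_mat _

lemma det_prodMap {V W : Type*} [AddCommGroup V] [Module ℂ V] [AddCommGroup W] [Module ℂ W]
    [FiniteDimensional ℂ V] [FiniteDimensional ℂ W]
    (f : Module.End ℂ V) (g : Module.End ℂ W) :
    LinearMap.det (f.prodMap g) = LinearMap.det f * LinearMap.det g := by
  classical
  let bV := Module.finBasis ℂ V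
  let bW := Module.finBasis ℂ W
  rw [← LinearMap.det_toMatrix (bV.prod bW), LinearMap.toMatrix_prodMap,
    Matrix.det_fromBlocks_zero₂₁, LinearMap.det_toMatrix, LinearMap.det_toMatrix]

lemma det_via_projection (V : Type*) [AddCommGroup V] [Module ℂ V] [FiniteDimensional ℂ V]
    (P T : Module.End ℂ V) (hP : P * P = P) (hPT : P * T = T * P)
    (hrk : trace ℂ V P = 2) (hrk' : trace ℂ V (1 - P) = 2) :
    (4 : ℂ) * LinearMap.det T =
      ((trace ℂ V (T * P)) ^ 2 - trace ℂ V (T * T * P)) *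
      ((trace ℂ V (T * (1 - P))) ^ 2 - trace ℂ V (T * T * (1 - P))) := by
  classical
  set p := LinearMap.range P with hp
  have hproj : LinearMap.IsProj p P :=
    ⟨fun x => LinearMap.mem_range_self P x, by
      rintro x ⟨y, rfl⟩
      have := congrArg (fun (S : Module.End ℂ V) => S y) hP
      simpa [Module.End.mul_apply] using this⟩
  set q := LinearMap.ker P with hq
  have hcompl : IsCompl p q := hproj.isCompl
  set e : (p × q) ≃ₗ[ℂ] V := Submodule.prodEquivOfIsCompl p q hcompl with he
  -- membership preservation for any S commuting with P
  have hmem : ∀ S : Module.End ℂ V, P * S = S * P →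
      (∀ x ∈ p, S x ∈ p) ∧ (∀ x ∈ q, S x ∈ q) := by
    intro S hS
    constructor
    · rintro x ⟨y, rfl⟩
      refine ⟨S y, ?_⟩
      have := congrArg (fun (A : Module.End ℂ V) => A y) hS
      simpa [Module.End.mul_apply] using this
    · intro x hx
      have hx' : P x = 0 := hx
      have := congrArg (fun (A : Module.End ℂ V) => A x) hS
      simp only [Module.End.mul_apply, hx', map_zero] at this
      exact LinearMap.mem_ker.mpr this
  -- conjugation: S = e.conj (prodMap Sp Sq)
  have hconj : ∀ (S : Module.End ℂ V) (hS : P * S = S * P),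
      e.conj (((S.restrict (hmem S hS).1).prodMap (S.restrict (hmem S hS).2))) = S := by
    intro S hS
    apply LinearMap.ext
    have hsurj := e.surjective
    intro v
    obtain ⟨z, rfl⟩ := hsurj v
    obtain ⟨x, y⟩ := z
    simp only [LinearEquiv.conj_apply, LinearMap.comp_apply, LinearEquiv.coe_coe,
      LinearEquiv.symm_apply_apply, LinearMap.prodMap_apply, Prod.map]
    rw [Submodule.coe_prodEquivOfIsCompl', Submodule.coe_prodEquivOfIsCompl']
    simp [LinearMap.restrict_apply]
  have hTT : P * (T * T) = (T * T) * P := by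
    rw [← mul_assoc, hPT, mul_assoc, hPT, mul_assoc]
  have h1c : P * (1 : Module.End ℂ V) = 1 * P := by rw [mul_one, one_mul]
  -- restrictions
  set Tp := T.restrict (hmem T hPT).1 with hTp
  set Tq := T.restrict (hmem T hPT).2 with hTq
  -- trace decomposition
  have htr : ∀ (S : Module.End ℂ V) (hS : P * S = S * P),
      trace ℂ V S = trace ℂ p (S.restrict (hmem S hS).1) + trace ℂ q (S.restrict (hmem S hS).2) := by
    intro S hS
    conv_lhs => rw [← hconj S hS]
    rw [trace_conj', trace_prodMap']
  -- restriction of S * P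
  have hSP : ∀ (S : Module.End ℂ V) (hS : P * S = S * P),
      trace ℂ V (S * P) = trace ℂ p (S.restrict (hmem S hS).1) := by
    intro S hS
    have hc : P * (S * P) = (S * P) * P := by
      rw [← mul_assoc, hS, mul_assoc, hP]
    rw [htr (S * P) hc]
    have e1 : (S * P).restrict (hmem (S * P) hc).1 = S.restrict (hmem S hS).1 := by
      apply LinearMap.ext; intro x; apply Subtype.ext
      simp only [LinearMap.restrict_apply, Module.End.mul_apply]
      congr 1
      exact hproj.map_id x x.2
    have e2 : (S * P).restrict (hmem (S * P) hc).2 = 0 := by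
      apply LinearMap.ext; intro x; apply Subtype.ext
      simp only [LinearMap.restrict_apply, Module.End.mul_apply, LinearMap.zero_apply]
      have hx : P (x : V) = 0 := x.2
      simp [hx]
    rw [e1, e2, map_zero, add_zero]
  -- ranks
  have hrkp : Module.finrank ℂ p = 2 := by
    have h1 : trace ℂ V ((1 : Module.End ℂ V) * P) = trace ℂ p ((1 : Module.End ℂ V).restrict (hmem 1 h1c).1) := hSP 1 h1c
    rw [one_mul, hrk] at h1
    have hres : (1 : Module.End ℂ V).restrict (hmem 1 h1c).1 = 1 := by
      apply LinearMap.ext; intro x; apply Subtype.ext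
      simp [LinearMap.restrict_apply]
    rw [hres, trace_one] at h1
    exact_mod_cast h1.symm
  have hrkq : Module.finrank ℂ q = 2 := by
    have h1 := htr 1 h1c
    have hres1 : (1 : Module.End ℂ V).restrict (hmem 1 h1c).1 = 1 := by
      apply LinearMap.ext; intro x; apply Subtype.ext
      simp [LinearMap.restrict_apply]
    have hres2 : (1 : Module.End ℂ V).restrict (hmem 1 h1c).2 = 1 := by
      apply LinearMap.ext; intro x; apply Subtype.ext
      simp [LinearMap.restrict_apply]
    rw [hres1, hres2, trace_one, trace_one, trace_one] at h1
    have h4 : (Module.finrank ℂ V : ℂ) = 4 := by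
      have := hrk'
      rw [map_sub, trace_one, hrk] at this
      linear_combination this
    rw [h4, hrkp] at h1
    have : (Module.finrank ℂ q : ℂ) = 2 := by push_cast at h1 ⊢; linear_combination -h1
    exact_mod_cast this
  -- multiplication of restrictions
  have hmul : (T * T).restrict (hmem (T * T) hTT).1 = Tp * Tp := by
    apply LinearMap.ext; intro x; apply Subtype.ext
    simp [LinearMap.restrict_apply, Module.End.mul_apply, hTp]
  have hmulq : (T * T).restrict (hmem (T * T) hTT).2 = Tq * Tq := by
    apply LinearMap.ext; intro x; apply Subtype.ext
    simp [LinearMap.restrict_apply, Module.End.mul_apply, hTq]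
  -- determinant decomposition
  have hdet : LinearMap.det T = LinearMap.det Tp * LinearMap.det Tq := by
    conv_lhs => rw [← hconj T hPT]
    rw [LinearEquiv.conj_apply, LinearMap.comp_assoc, LinearMap.det_conj, _root_.det_prodMap]
  -- trace values
  have t1 : trace ℂ V (T * P) = trace ℂ p Tp := hSP T hPT
  have t2 : trace ℂ V (T * T * P) = trace ℂ p (Tp * Tp) := by
    rw [hSP (T * T) hTT, hmul]
  have t3 : trace ℂ V (T * (1 - P)) = trace ℂ q Tq := by
    have : T * (1 - P) = T - T * P := by rw [mul_sub, mul_one]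
    rw [this, map_sub, t1, htr T hPT]
    ring
  have t4 : trace ℂ V (T * T * (1 - P)) = trace ℂ q (Tq * Tq) := by
    have : T * T * (1 - P) = T * T - T * T * P := by rw [mul_sub, mul_one]
    rw [this, map_sub, t2, htr (T * T) hTT, hmul, hmulq]
    ring
  have d1 := det_end_two p hrkp Tp
  have d2 := det_end_two q hrkq Tq
  rw [hdet, t1, t2, t3, t4]
  linear_combination ((trace ℂ q Tq) ^ 2 - trace ℂ q (Tq * Tq)) * d1 + 2 * LinearMap.det Tp * d2

/-- In the Clifford algebra `Cl(ℝ⁴)` acting on the 4-dimensional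
complex spinor space `Δ₄`, the determinant of `a + ω + f·e₁₂₃₄` equals
`[(a+f)² + 4‖ω₊‖²]·[(a−f)² + 4‖ω₋‖²]`.  Here `Δ₄` is modelled as a
4-dimensional complex module with Clifford multiplications `c i` by the basis
vectors, a 2-form `ω` acts as `(1/2) Σ_{ij} ω_{ij} cᵢ cⱼ`, and the volume form
`e₁₂₃₄` acts as `c₀ c₁ c₂ c₃`. -/
theorem det_clifford_element_dim_four
    (Δ : Type*) [AddCommGroup Δ] [Module ℂ Δ]
    (hdim : Module.finrank ℂ Δ = 4)
    (c : Fin 4 → Module.End ℂ Δ)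
    (hrel : ∀ i j : Fin 4,
        c i * c j + c j * c i = if i = j then (-2 : ℂ) • 1 else 0)
    (a f : ℝ) (ω : Fin 4 → Fin 4 → ℝ)
    (hω : ∀ i j, ω i j = - ω j i) :
    LinearMap.det
        ((a : ℂ) • (1 : Module.End ℂ Δ)
          + (1 / 2 : ℂ) • ∑ i : Fin 4, ∑ j : Fin 4,
              ((ω i j : ℝ) : ℂ) • (c i * c j)
          + (f : ℂ) • (c 0 * c 1 * c 2 * c 3))
      = ((((a + f) ^ 2 + 4 * normSq2 (sdPart ω))
          * ((a - f) ^ 2 + 4 * normSq2 (asdPart ω)) : ℝ) : ℂ) := by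
  have hfin : FiniteDimensional ℂ Δ := Module.finite_of_finrank_pos (by omega)
  have sq : ∀ i, c i * c i = -1 := by
    intro i
    have h := hrel i i
    rw [if_pos rfl] at h
    have h2 : (2 : ℂ) • (c i * c i) = (2:ℂ) • (-1 : Module.End ℂ Δ) := by
      rw [two_smul, h]; module
    exact smul_right_injective _ (by norm_num) h2
  have sw : ∀ i j, i ≠ j → c i * c j = -(c j * c i) := by
    intro i j hij
    have h := hrel i j
    rw [if_neg hij] at h
    rw [eq_neg_iff_add_eq_zero, h]
  have sqA : ∀ (i : Fin 4) (x : Module.End ℂ Δ), c i * (c i * x) = -x := by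
    intro i x; rw [← mul_assoc, sq i, neg_one_mul]
  have swA : ∀ (i j : Fin 4), i ≠ j → ∀ (x : Module.End ℂ Δ),
      c i * (c j * x) = -(c j * (c i * x)) := by
    intro i j h x; rw [← mul_assoc, sw i j h, neg_mul, mul_assoc]
  -- abbreviations
  set G := c 0 * c 1 * c 2 * c 3 with hGdef
  set W := (1 / 2 : ℂ) • ∑ i : Fin 4, ∑ j : Fin 4,
      ((ω i j : ℝ) : ℂ) • (c i * c j) with hWdef
  -- antisymmetry facts
  have hzero : ∀ i, ω i i = 0 := fun i => by have := hω i i; linarith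
  have h10 : ω 1 0 = -ω 0 1 := hω 1 0
  have h20 : ω 2 0 = -ω 0 2 := hω 2 0
  have h30 : ω 3 0 = -ω 0 3 := hω 3 0
  have h21 : ω 2 1 = -ω 1 2 := hω 2 1
  have h31 : ω 3 1 = -ω 1 3 := hω 3 1
  have h32 : ω 3 2 = -ω 2 3 := hω 3 2
  have hW : W = ((ω 0 1 : ℝ) : ℂ) • (c 0 * c 1) + ((ω 0 2 : ℝ) : ℂ) • (c 0 * c 2)
      + ((ω 0 3 : ℝ) : ℂ) • (c 0 * c 3) + ((ω 1 2 : ℝ) : ℂ) • (c 1 * c 2)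
      + ((ω 1 3 : ℝ) : ℂ) • (c 1 * c 3) + ((ω 2 3 : ℝ) : ℂ) • (c 2 * c 3) := by
    rw [hWdef]
    simp only [Fin.sum_univ_four, hzero 0, hzero 1, hzero 2, hzero 3,
      h10, h20, h30, h21, h31, h32, Complex.ofReal_zero, Complex.ofReal_neg,
      zero_smul, neg_smul, sw 1 0 (by decide), sw 2 0 (by decide), sw 3 0 (by decide),
      sw 2 1 (by decide), sw 3 1 (by decide), sw 3 2 (by decide), smul_neg, neg_neg]
    module
  have hGG : G * G = 1 := by
    rw [hGdef]
    simp only [mul_assoc]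
    simp only [ swA 1 0 (by decide), swA 2 0 (by decide), swA 3 0 (by decide),
      swA 2 1 (by decide), swA 3 1 (by decide), swA 3 2 (by decide),
      sw 1 0 (by decide), sw 2 0 (by decide), sw 3 0 (by decide),
      sw 2 1 (by decide), sw 3 1 (by decide), sw 3 2 (by decide),
      sqA 0, sqA 1, sqA 2, sqA 3, sq 0, sq 1, sq 2, sq 3,
      mul_neg, neg_mul, neg_neg, mul_one, one_mul]
  have hGW : G * W = W * G := by
    rw [hW, hGdef]
    simp only [smul_mul_assoc, mul_smul_comm, add_mul, mul_add, smul_smul, smul_add, smul_neg]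
    simp only [mul_assoc]
    simp only [ swA 1 0 (by decide), swA 2 0 (by decide), swA 3 0 (by decide),
      swA 2 1 (by decide), swA 3 1 (by decide), swA 3 2 (by decide),
      sw 1 0 (by decide), sw 2 0 (by decide), sw 3 0 (by decide),
      sw 2 1 (by decide), sw 3 1 (by decide), sw 3 2 (by decide),
      sqA 0, sqA 1, sqA 2, sqA 3, sq 0, sq 1, sq 2, sq 3,
      mul_neg, neg_mul, neg_neg, mul_one, one_mul]
  -- W * W
  set sC : ℂ := -(((ω 0 1 : ℝ) : ℂ)^2 + ((ω 0 2 : ℝ) : ℂ)^2 + ((ω 0 3 : ℝ) : ℂ)^2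
      + ((ω 1 2 : ℝ) : ℂ)^2 + ((ω 1 3 : ℝ) : ℂ)^2 + ((ω 2 3 : ℝ) : ℂ)^2) with hsC
  set pC : ℂ := 2 * (((ω 0 1 : ℝ) : ℂ) * ((ω 2 3 : ℝ) : ℂ)
      - ((ω 0 2 : ℝ) : ℂ) * ((ω 1 3 : ℝ) : ℂ)
      + ((ω 0 3 : ℝ) : ℂ) * ((ω 1 2 : ℝ) : ℂ)) with hpC
  have hWW : W * W = sC • 1 + pC • G := by
    rw [hW, hGdef, hsC, hpC]
    simp only [smul_mul_assoc, mul_smul_comm, add_mul, mul_add, smul_smul, smul_add, smul_neg]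
    simp only [mul_assoc]
    simp only [ swA 1 0 (by decide), swA 2 0 (by decide), swA 3 0 (by decide),
      swA 2 1 (by decide), swA 3 1 (by decide), swA 3 2 (by decide),
      sw 1 0 (by decide), sw 2 0 (by decide), sw 3 0 (by decide),
      sw 2 1 (by decide), sw 3 1 (by decide), sw 3 2 (by decide),
      sqA 0, sqA 1, sqA 2, sqA 3, sq 0, sq 1, sq 2, sq 3,
      mul_neg, neg_mul, neg_neg, mul_one, one_mul]
    match_scalars <;> ring
  -- trace tools
  have trace_zero : ∀ A X : Module.End ℂ Δ, X * X = -1 → X * A = -(A * X) →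
      LinearMap.trace ℂ Δ A = 0 := by
    intro A X h1 h2
    have h3 : X * A * X = A := by
      rw [h2, neg_mul, mul_assoc, h1, mul_neg_one, neg_neg]
    have h4 : LinearMap.trace ℂ Δ A = - LinearMap.trace ℂ Δ A := by
      conv_lhs => rw [← h3]
      rw [LinearMap.trace_mul_comm, ← mul_assoc, h1, neg_one_mul, map_neg]
    have h5 : (2:ℂ) * LinearMap.trace ℂ Δ A = 0 := by linear_combination h4
    have := mul_eq_zero.mp h5
    simpa using this
  have tr01 : LinearMap.trace ℂ Δ (c 0 * c 1) = 0 := by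
    refine trace_zero _ (c 0) (sq 0) ?_
    simp only [mul_assoc]; simp only [ swA 1 0 (by decide), swA 2 0 (by decide), swA 3 0 (by decide),
      swA 2 1 (by decide), swA 3 1 (by decide), swA 3 2 (by decide),
      sw 1 0 (by decide), sw 2 0 (by decide), sw 3 0 (by decide),
      sw 2 1 (by decide), sw 3 1 (by decide), sw 3 2 (by decide),
      sqA 0, sqA 1, sqA 2, sqA 3, sq 0, sq 1, sq 2, sq 3,
      mul_neg, neg_mul, neg_neg, mul_one, one_mul]
  have tr02 : LinearMap.trace ℂ Δ (c 0 * c 2) = 0 := by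
    refine trace_zero _ (c 0) (sq 0) ?_
    simp only [mul_assoc]; simp only [ swA 1 0 (by decide), swA 2 0 (by decide), swA 3 0 (by decide),
      swA 2 1 (by decide), swA 3 1 (by decide), swA 3 2 (by decide),
      sw 1 0 (by decide), sw 2 0 (by decide), sw 3 0 (by decide),
      sw 2 1 (by decide), sw 3 1 (by decide), sw 3 2 (by decide),
      sqA 0, sqA 1, sqA 2, sqA 3, sq 0, sq 1, sq 2, sq 3,
      mul_neg, neg_mul, neg_neg, mul_one, one_mul]
  have tr03 : LinearMap.trace ℂ Δ (c 0 * c 3) = 0 := by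
    refine trace_zero _ (c 0) (sq 0) ?_
    simp only [mul_assoc]; simp only [ swA 1 0 (by decide), swA 2 0 (by decide), swA 3 0 (by decide),
      swA 2 1 (by decide), swA 3 1 (by decide), swA 3 2 (by decide),
      sw 1 0 (by decide), sw 2 0 (by decide), sw 3 0 (by decide),
      sw 2 1 (by decide), sw 3 1 (by decide), sw 3 2 (by decide),
      sqA 0, sqA 1, sqA 2, sqA 3, sq 0, sq 1, sq 2, sq 3,
      mul_neg, neg_mul, neg_neg, mul_one, one_mul]
  have tr12 : LinearMap.trace ℂ Δ (c 1 * c 2) = 0 := by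
    refine trace_zero _ (c 1) (sq 1) ?_
    simp only [mul_assoc]; simp only [ swA 1 0 (by decide), swA 2 0 (by decide), swA 3 0 (by decide),
      swA 2 1 (by decide), swA 3 1 (by decide), swA 3 2 (by decide),
      sw 1 0 (by decide), sw 2 0 (by decide), sw 3 0 (by decide),
      sw 2 1 (by decide), sw 3 1 (by decide), sw 3 2 (by decide),
      sqA 0, sqA 1, sqA 2, sqA 3, sq 0, sq 1, sq 2, sq 3,
      mul_neg, neg_mul, neg_neg, mul_one, one_mul]
  have tr13 : LinearMap.trace ℂ Δ (c 1 * c 3) = 0 := by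
    refine trace_zero _ (c 1) (sq 1) ?_
    simp only [mul_assoc]; simp only [ swA 1 0 (by decide), swA 2 0 (by decide), swA 3 0 (by decide),
      swA 2 1 (by decide), swA 3 1 (by decide), swA 3 2 (by decide),
      sw 1 0 (by decide), sw 2 0 (by decide), sw 3 0 (by decide),
      sw 2 1 (by decide), sw 3 1 (by decide), sw 3 2 (by decide),
      sqA 0, sqA 1, sqA 2, sqA 3, sq 0, sq 1, sq 2, sq 3,
      mul_neg, neg_mul, neg_neg, mul_one, one_mul]
  have tr23 : LinearMap.trace ℂ Δ (c 2 * c 3) = 0 := by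
    refine trace_zero _ (c 2) (sq 2) ?_
    simp only [mul_assoc]; simp only [ swA 1 0 (by decide), swA 2 0 (by decide), swA 3 0 (by decide),
      swA 2 1 (by decide), swA 3 1 (by decide), swA 3 2 (by decide),
      sw 1 0 (by decide), sw 2 0 (by decide), sw 3 0 (by decide),
      sw 2 1 (by decide), sw 3 1 (by decide), sw 3 2 (by decide),
      sqA 0, sqA 1, sqA 2, sqA 3, sq 0, sq 1, sq 2, sq 3,
      mul_neg, neg_mul, neg_neg, mul_one, one_mul]
  have trG : LinearMap.trace ℂ Δ G = 0 := by
    refine trace_zero _ (c 0) (sq 0) ?_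
    rw [hGdef]
    simp only [mul_assoc]; simp only [ swA 1 0 (by decide), swA 2 0 (by decide), swA 3 0 (by decide),
      swA 2 1 (by decide), swA 3 1 (by decide), swA 3 2 (by decide),
      sw 1 0 (by decide), sw 2 0 (by decide), sw 3 0 (by decide),
      sw 2 1 (by decide), sw 3 1 (by decide), sw 3 2 (by decide),
      sqA 0, sqA 1, sqA 2, sqA 3, sq 0, sq 1, sq 2, sq 3,
      mul_neg, neg_mul, neg_neg, mul_one, one_mul]
  have tr1 : LinearMap.trace ℂ Δ 1 = 4 := by
    rw [LinearMap.trace_one, hdim]; norm_num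
  have trW : LinearMap.trace ℂ Δ W = 0 := by
    rw [hW]
    simp only [map_add, map_smul, tr01, tr02, tr03, tr12, tr13, tr23, smul_eq_mul]
    ring
  have hWGex : W * G = (-((ω 0 1 : ℝ) : ℂ)) • (c 2 * c 3) + (((ω 0 2 : ℝ) : ℂ)) • (c 1 * c 3)
      + (-((ω 0 3 : ℝ) : ℂ)) • (c 1 * c 2) + (-((ω 1 2 : ℝ) : ℂ)) • (c 0 * c 3)
      + (((ω 1 3 : ℝ) : ℂ)) • (c 0 * c 2) + (-((ω 2 3 : ℝ) : ℂ)) • (c 0 * c 1) := by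
    rw [hW, hGdef]
    simp only [smul_mul_assoc, mul_smul_comm, add_mul, mul_add, smul_smul, smul_add, smul_neg]
    simp only [mul_assoc]
    simp only [ swA 1 0 (by decide), swA 2 0 (by decide), swA 3 0 (by decide),
      swA 2 1 (by decide), swA 3 1 (by decide), swA 3 2 (by decide),
      sw 1 0 (by decide), sw 2 0 (by decide), sw 3 0 (by decide),
      sw 2 1 (by decide), sw 3 1 (by decide), sw 3 2 (by decide),
      sqA 0, sqA 1, sqA 2, sqA 3, sq 0, sq 1, sq 2, sq 3,
      mul_neg, neg_mul, neg_neg, mul_one, one_mul]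
    match_scalars <;> ring
  have trWG : LinearMap.trace ℂ Δ (W * G) = 0 := by
    rw [hWGex]
    simp only [map_add, map_smul, tr01, tr02, tr03, tr12, tr13, tr23, smul_eq_mul]
    ring
  -- the operator
  set T := (a : ℂ) • (1 : Module.End ℂ Δ) + W + (f : ℂ) • G with hT
  set A : ℂ := (a:ℂ)^2 + (f:ℂ)^2 + sC with hA
  set B : ℂ := 2*(a:ℂ)*(f:ℂ) + pC with hB
  have hT2 : T * T = A • 1 + B • G + (2*(a:ℂ)) • W + (2*(f:ℂ)) • (W * G) := by
    rw [hT, hA, hB]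
    simp only [smul_mul_assoc, mul_smul_comm, add_mul, mul_add, smul_smul, smul_add, smul_neg, one_mul, mul_one]
    rw [hWW, hGG, hGW]
    match_scalars <;> ring
  have trT : LinearMap.trace ℂ Δ T = 4*(a:ℂ) := by
    rw [hT]
    simp only [map_add, map_smul, tr1, trW, trG, smul_eq_mul]
    ring
  have hTG : T * G = (a : ℂ) • G + W * G + (f : ℂ) • 1 := by
    rw [hT]
    simp only [smul_mul_assoc, mul_smul_comm, add_mul, mul_add, smul_smul, smul_add, smul_neg, one_mul]
    rw [hGG]
  have trTG : LinearMap.trace ℂ Δ (T * G) = 4*(f:ℂ) := by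
    rw [hTG]
    simp only [map_add, map_smul, tr1, trWG, trG, smul_eq_mul]
    ring
  have trT2 : LinearMap.trace ℂ Δ (T * T) = 4*A := by
    rw [hT2]
    simp only [map_add, map_smul, tr1, trW, trG, trWG, smul_eq_mul]
    ring
  have hT2G : (T * T) * G = A • G + B • 1 + (2*(a:ℂ)) • (W * G) + (2*(f:ℂ)) • W := by
    rw [hT2]
    simp only [smul_mul_assoc, mul_smul_comm, add_mul, mul_add, smul_smul, smul_add, smul_neg, one_mul]
    rw [hGG, mul_assoc, hGG, mul_one]
  have trT2G : LinearMap.trace ℂ Δ ((T * T) * G) = 4*B := by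
    rw [hT2G]
    simp only [map_add, map_smul, tr1, trW, trG, trWG, smul_eq_mul]
    ring
  -- projection
  set P := (2⁻¹ : ℂ) • ((1 : Module.End ℂ Δ) + G) with hP
  have hPP : P * P = P := by
    rw [hP]
    simp only [smul_mul_assoc, mul_smul_comm, add_mul, mul_add, smul_smul, smul_add, smul_neg, one_mul, mul_one]
    rw [hGG]
    module
  have hPT : P * T = T * P := by
    rw [hP, hT]
    simp only [smul_mul_assoc, mul_smul_comm, add_mul, mul_add, smul_smul, smul_add, smul_neg, one_mul, mul_one]
    rw [hGW]
    module
  have trP : LinearMap.trace ℂ Δ P = 2 := by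
    rw [hP]
    simp only [map_add, map_smul, tr1, trG]
    norm_num
  have trP' : LinearMap.trace ℂ Δ (1 - P) = 2 := by
    rw [map_sub, tr1, trP]; norm_num
  have hmain := det_via_projection Δ P T hPP hPT trP trP'
  have hTP : T * P = (2⁻¹ : ℂ) • (T + T * G) := by
    rw [hP]; simp only [mul_smul_comm, mul_add, mul_one]
  have hT2P : (T * T) * P = (2⁻¹ : ℂ) • (T * T + (T * T) * G) := by
    rw [hP]; simp only [mul_smul_comm, mul_add, mul_one]
  have hTP' : T * (1 - P) = T - T * P := by rw [mul_sub, mul_one]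
  have hT2P' : (T * T) * (1 - P) = T * T - (T * T) * P := by rw [mul_sub, mul_one]
  have e1 : LinearMap.trace ℂ Δ (T * P) = 2*(a:ℂ) + 2*(f:ℂ) := by
    rw [hTP, map_smul, map_add, trT, trTG]; ring_nf
  have e2 : LinearMap.trace ℂ Δ ((T * T) * P) = 2*A + 2*B := by
    rw [hT2P, map_smul, map_add, trT2, trT2G]; ring_nf
  have e3 : LinearMap.trace ℂ Δ (T * (1 - P)) = 2*(a:ℂ) - 2*(f:ℂ) := by
    rw [hTP', map_sub, trT, e1]; ring
  have e4 : LinearMap.trace ℂ Δ ((T * T) * (1 - P)) = 2*A - 2*B := by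
    rw [hT2P', map_sub, trT2, e2]; ring
  rw [e1, e2, e3, e4] at hmain
  have hdetT : LinearMap.det T =
      (((a:ℂ)+(f:ℂ))^2 - sC - pC) * (((a:ℂ)-(f:ℂ))^2 - sC + pC) := by
    rw [hA, hB] at hmain
    linear_combination hmain / 4
  rw [hdetT]
  have hod00 : hodge ω 0 0 = 0 := by
    simp (config := { decide := true }) [hodge, eps4, Fin.sum_univ_four, hzero 0, hzero 1,
      hzero 2, hzero 3, h10, h20, h30, h21, h31, h32]
    try ring
  have hod01 : hodge ω 0 1 = -ω 2 3 := by
    simp (config := { decide := true }) [hodge, eps4, Fin.sum_univ_four, hzero 0, hzero 1,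
      hzero 2, hzero 3, h10, h20, h30, h21, h31, h32]
    try ring
  have hod02 : hodge ω 0 2 = ω 1 3 := by
    simp (config := { decide := true }) [hodge, eps4, Fin.sum_univ_four, hzero 0, hzero 1,
      hzero 2, hzero 3, h10, h20, h30, h21, h31, h32]
    try ring
  have hod03 : hodge ω 0 3 = -ω 1 2 := by
    simp (config := { decide := true }) [hodge, eps4, Fin.sum_univ_four, hzero 0, hzero 1,
      hzero 2, hzero 3, h10, h20, h30, h21, h31, h32]
    try ring
  have hod10 : hodge ω 1 0 = ω 2 3 := by
    simp (config := { decide := true }) [hodge, eps4, Fin.sum_univ_four, hzero 0, hzero 1,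
      hzero 2, hzero 3, h10, h20, h30, h21, h31, h32]
    try ring
  have hod11 : hodge ω 1 1 = 0 := by
    simp (config := { decide := true }) [hodge, eps4, Fin.sum_univ_four, hzero 0, hzero 1,
      hzero 2, hzero 3, h10, h20, h30, h21, h31, h32]
    try ring
  have hod12 : hodge ω 1 2 = -ω 0 3 := by
    simp (config := { decide := true }) [hodge, eps4, Fin.sum_univ_four, hzero 0, hzero 1,
      hzero 2, hzero 3, h10, h20, h30, h21, h31, h32]
    try ring
  have hod13 : hodge ω 1 3 = ω 0 2 := by
    simp (config := { decide := true }) [hodge, eps4, Fin.sum_univ_four, hzero 0, hzero 1,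
      hzero 2, hzero 3, h10, h20, h30, h21, h31, h32]
    try ring
  have hod20 : hodge ω 2 0 = -ω 1 3 := by
    simp (config := { decide := true }) [hodge, eps4, Fin.sum_univ_four, hzero 0, hzero 1,
      hzero 2, hzero 3, h10, h20, h30, h21, h31, h32]
    try ring
  have hod21 : hodge ω 2 1 = ω 0 3 := by
    simp (config := { decide := true }) [hodge, eps4, Fin.sum_univ_four, hzero 0, hzero 1,
      hzero 2, hzero 3, h10, h20, h30, h21, h31, h32]
    try ring
  have hod22 : hodge ω 2 2 = 0 := by
    simp (config := { decide := true }) [hodge, eps4, Fin.sum_univ_four, hzero 0, hzero 1,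
      hzero 2, hzero 3, h10, h20, h30, h21, h31, h32]
    try ring
  have hod23 : hodge ω 2 3 = -ω 0 1 := by
    simp (config := { decide := true }) [hodge, eps4, Fin.sum_univ_four, hzero 0, hzero 1,
      hzero 2, hzero 3, h10, h20, h30, h21, h31, h32]
    try ring
  have hod30 : hodge ω 3 0 = ω 1 2 := by
    simp (config := { decide := true }) [hodge, eps4, Fin.sum_univ_four, hzero 0, hzero 1,
      hzero 2, hzero 3, h10, h20, h30, h21, h31, h32]
    try ring
  have hod31 : hodge ω 3 1 = -ω 0 2 := by
    simp (config := { decide := true }) [hodge, eps4, Fin.sum_univ_four, hzero 0, hzero 1,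
      hzero 2, hzero 3, h10, h20, h30, h21, h31, h32]
    try ring
  have hod32 : hodge ω 3 2 = ω 0 1 := by
    simp (config := { decide := true }) [hodge, eps4, Fin.sum_univ_four, hzero 0, hzero 1,
      hzero 2, hzero 3, h10, h20, h30, h21, h31, h32]
    try ring
  have hod33 : hodge ω 3 3 = 0 := by
    simp (config := { decide := true }) [hodge, eps4, Fin.sum_univ_four, hzero 0, hzero 1,
      hzero 2, hzero 3, h10, h20, h30, h21, h31, h32]
    try ring
  have hsd : normSq2 (sdPart ω) = ((ω 0 1^2 + ω 0 2^2 + ω 0 3^2 + ω 1 2^2 + ω 1 3^2 + ω 2 3^2)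
      - 2*(ω 0 1*ω 2 3 - ω 0 2*ω 1 3 + ω 0 3*ω 1 2))/4 := by
    simp only [normSq2, sdPart, Fin.sum_univ_four, hod00, hod01, hod02, hod03, hod10, hod11, hod12, hod13, hod20, hod21, hod22, hod23, hod30, hod31, hod32, hod33,
      hzero 0, hzero 1, hzero 2, hzero 3, h10, h20, h30, h21, h31, h32]
    ring
  have hasd : normSq2 (asdPart ω) = ((ω 0 1^2 + ω 0 2^2 + ω 0 3^2 + ω 1 2^2 + ω 1 3^2 + ω 2 3^2)
      + 2*(ω 0 1*ω 2 3 - ω 0 2*ω 1 3 + ω 0 3*ω 1 2))/4 := by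
    simp only [normSq2, asdPart, Fin.sum_univ_four, hod00, hod01, hod02, hod03, hod10, hod11, hod12, hod13, hod20, hod21, hod22, hod23, hod30, hod31, hod32, hod33,
      hzero 0, hzero 1, hzero 2, hzero 3, h10, h20, h30, h21, h31, h32]
    ring
  rw [hsd, hasd, hsC, hpC]
  push_cast
  ring
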